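/- If there exists an integer n' ≥ 0 such that 0 < p(n') < p(n'+1), then 0 < p(n) < p(n+1) for all integers n ≥ n'. -/
import Mathlib


/-- `pSeq a b k l p` says that `p : ℤ → ℤ` is the (unique) sequence with `p 0 = l`,
`p 1 = k`, and `p (m+2) = b * p (m+1) - p m` for even `m`,
`p (m+2) = a * p (m+1) - p m` for odd `m`. -/
def pSeq (a b k l : ℤ) (p : ℤ → ℤ) : Prop :=
  p 0 = l ∧ p 1 = k ∧
    ∀ m : ℤ, p (m + 2) = (if Even m then b else a) * p (m + 1) - p m

theorem p_increasing_of_exists (a b k l : ℤ) (ha : 2 ≤ a) (hb : 2 ≤ b) (hab : 4 < a * b)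
    (p : ℤ → ℤ) (hp : pSeq a b k l p)
    (n' : ℤ) (hn' : 0 ≤ n') (h1 : 0 < p n') (h2 : p n' < p (n' + 1)) :
    ∀ n : ℤ, n' ≤ n → 0 < p n ∧ p n < p (n + 1) := by
  obtain ⟨-, -, hrec⟩ := hp
  refine Int.le_induction ⟨h1, h2⟩ ?_
  rintro m hm ⟨ih1, ih2⟩
  refine ⟨by linarith, ?_⟩
  have h := hrec m
  rw [show m + 1 + 1 = m + 2 by ring]
  have hc : 2 ≤ (if Even m then b else a) := by split <;> assumption
  have hp1 : 0 < p (m + 1) := by linarith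
  nlinarith [mul_le_mul_of_nonneg_right hc hp1.le]
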